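/- For r > 1 and φ ∈ (-π/2, π/2), define the 2×2 real matrix D_{r,φ}(v) = (r/2)(I₂ + ((1-2/r)/cos φ) K(2ψ - φ)), where ψ is the polar angle of v ∈ ℝ² \ {0} and K(α) is the symmetric matrix with rows (cos α, sin α) and (sin α, -cos α). Then D_{r,φ}(v) induces a positive semidefinite quadratic form on ℝ² if and only if |φ| ≤ arctan(2√(r-1)/|r-2|) (interpreted as π/2 when r = 2). -/

import Mathlib

noncomputable section
open Real Matrix

def Kmat (α : ℝ) : Matrix (Fin 2) (Fin 2) ℝ :=
  !![Real.cos α, Real.sin α; Real.sin α, -Real.cos α]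

lemma psd_aux (s c θ : ℝ) (hs : 0 < s) :
    (s • ((1 : Matrix (Fin 2) (Fin 2) ℝ) + c • Kmat θ)).PosSemidef ↔ |c| ≤ 1 := by
  have hc : Real.cos θ = Real.cos (θ/2) ^ 2 - Real.sin (θ/2) ^ 2 := by
    have h2m := Real.cos_two_mul (θ/2)
    rw [show 2 * (θ/2) = θ by ring] at h2m
    linarith [Real.sin_sq_add_cos_sq (θ/2)]
  have hsin : Real.sin θ = 2 * Real.sin (θ/2) * Real.cos (θ/2) := by
    have := Real.sin_two_mul (θ/2)
    rw [show 2 * (θ/2) = θ by ring] at this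
    linarith
  have hpyth := Real.sin_sq_add_cos_sq (θ/2)
  constructor
  · intro h
    have h1 := (posSemidef_iff_dotProduct_mulVec.1 h).2 ![Real.cos (θ/2), Real.sin (θ/2)]
    have h2 := (posSemidef_iff_dotProduct_mulVec.1 h).2 ![-Real.sin (θ/2), Real.cos (θ/2)]
    simp [Kmat, dotProduct, Matrix.mulVec, Fin.sum_univ_two, Matrix.one_apply] at h1 h2
    rw [hc, hsin] at h1 h2
    have e1 : Real.cos (θ/2) * (s * (1 + c * (Real.cos (θ/2)^2 - Real.sin (θ/2)^2)) * Real.cos (θ/2) + s * (c * (2 * Real.sin (θ/2) * Real.cos (θ/2))) * Real.sin (θ/2)) + Real.sin (θ/2) * (s * (c * (2 * Real.sin (θ/2) * Real.cos (θ/2))) * Real.cos (θ/2) + s * (1 + -(c * (Real.cos (θ/2)^2 - Real.sin (θ/2)^2))) * Real.sin (θ/2)) = s * (1 + c) := by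
      linear_combination (s + s * c * (Real.sin (θ/2)^2 + Real.cos (θ/2)^2 + 1)) * hpyth
    have e2 : Real.cos (θ/2) * (-(s * (c * (2 * Real.sin (θ/2) * Real.cos (θ/2))) * Real.sin (θ/2)) + s * (1 + -(c * (Real.cos (θ/2)^2 - Real.sin (θ/2)^2))) * Real.cos (θ/2)) - Real.sin (θ/2) * (-(s * (1 + c * (Real.cos (θ/2)^2 - Real.sin (θ/2)^2)) * Real.sin (θ/2)) + s * (c * (2 * Real.sin (θ/2) * Real.cos (θ/2))) * Real.cos (θ/2)) = s * (1 - c) := by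
      linear_combination (s - s * c * (Real.sin (θ/2)^2 + Real.cos (θ/2)^2 + 1)) * hpyth
    have h1' : 0 ≤ s * (1 + c) := by rw [← e1]; linarith [h1]
    have h2' : 0 ≤ s * (1 - c) := by rw [← e2]; linarith [h2]
    rw [abs_le]
    constructor <;> nlinarith [h1', h2', hs]
  · intro h
    rw [posSemidef_iff_dotProduct_mulVec]
    constructor
    · unfold Matrix.IsHermitian
      ext i j
      fin_cases i <;> fin_cases j <;>
        simp [Kmat, Matrix.conjTranspose_apply] <;> ring
    · intro x
      simp [Kmat, dotProduct, Matrix.mulVec, Fin.sum_univ_two, Matrix.one_apply]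
      set q : ℝ := Real.cos θ * (x 0 ^ 2 - x 1 ^ 2) + Real.sin θ * (2 * x 0 * x 1) with hq
      have key : q ^ 2 + (Real.sin θ * (x 0 ^ 2 - x 1 ^ 2) - Real.cos θ * (2 * x 0 * x 1)) ^ 2
          = (x 0 ^ 2 + x 1 ^ 2) ^ 2 := by
        rw [hq]
        linear_combination ((x 0 ^ 2 - x 1 ^ 2) ^ 2 + (2 * x 0 * x 1) ^ 2) *
          Real.sin_sq_add_cos_sq θ
      have hqabs : |q| ≤ x 0 ^ 2 + x 1 ^ 2 := by
        rw [abs_le]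
        constructor <;>
          nlinarith [key, sq_nonneg (Real.sin θ * (x 0 ^ 2 - x 1 ^ 2) - Real.cos θ * (2 * x 0 * x 1)),
            sq_nonneg (x 0), sq_nonneg (x 1)]
      have hcq : -(x 0 ^ 2 + x 1 ^ 2) ≤ c * q := by
        have : |c * q| ≤ x 0 ^ 2 + x 1 ^ 2 := by
          rw [abs_mul]
          calc |c| * |q| ≤ 1 * (x 0 ^ 2 + x 1 ^ 2) :=
                mul_le_mul h hqabs (abs_nonneg _) zero_le_one
            _ = _ := one_mul _
        linarith [(abs_le.1 this).1]
      have expand : x 0 * ((s * (1 + c * Real.cos θ)) * x 0 + (s * (c * Real.sin θ)) * x 1)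
          + x 1 * ((s * (c * Real.sin θ)) * x 0 + (s * (1 + -(c * Real.cos θ))) * x 1)
          = s * ((x 0 ^ 2 + x 1 ^ 2) + c * q) := by rw [hq]; ring
      have final : 0 ≤ s * ((x 0 ^ 2 + x 1 ^ 2) + c * q) :=
        mul_nonneg hs.le (by nlinarith [hcq, sq_nonneg (x 0), sq_nonneg (x 1)])
      linarith [final, expand]

def Omat (φ : ℝ) : Matrix (Fin 2) (Fin 2) ℝ :=
  !![Real.cos φ, -Real.sin φ; Real.sin φ, Real.cos φ]

def polarAngle (v : Fin 2 → ℝ) : ℝ := Complex.arg (⟨v 0, v 1⟩ : ℂ)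

/-- The matrix `D_{r,φ}(v)` of Bakry. -/
def Dmat (r φ : ℝ) (v : Fin 2 → ℝ) : Matrix (Fin 2) (Fin 2) ℝ :=
  (r / 2) • ((1 : Matrix (Fin 2) (Fin 2) ℝ) +
    ((1 - 2 / r) / Real.cos φ) • Kmat (2 * polarAngle v - φ))

theorem stmt0 (r φ : ℝ) (hr : 1 < r) (hφ : φ ∈ Set.Ioo (-(π / 2)) (π / 2))
    (v : Fin 2 → ℝ) (hv : v ≠ 0) :
    (Dmat r φ v).PosSemidef ↔
      |φ| ≤ if r = 2 then π / 2 else Real.arctan (2 * Real.sqrt (r - 1) / |r - 2|) := by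
  obtain ⟨hφ1, hφ2⟩ := hφ
  have hcosφ : 0 < Real.cos φ := Real.cos_pos_of_mem_Ioo ⟨hφ1, hφ2⟩
  have hr0 : 0 < r := by linarith
  have hφabs : |φ| < π / 2 := abs_lt.2 ⟨by linarith, hφ2⟩
  rw [Dmat, psd_aux _ _ _ (by linarith : (0:ℝ) < r / 2),
    abs_div, abs_of_pos hcosφ, div_le_one hcosφ]
  by_cases h2 : r = 2
  · subst h2
    rw [if_pos rfl]
    constructor
    · intro _; exact hφabs.le
    · intro _
      norm_num
      exact hcosφ.le
  · rw [if_neg h2]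
    have hane : r - 2 ≠ 0 := sub_ne_zero.2 h2
    have hapos : 0 < |r - 2| := abs_pos.2 hane
    have ha : |1 - 2 / r| = |r - 2| / r := by
      rw [show (1 - 2 / r) = (r - 2) / r by field_simp, abs_div, abs_of_pos hr0]
    have ha1 : |r - 2| / r < 1 := by
      rw [div_lt_one hr0]
      rcases abs_cases (r - 2) with ⟨h, _⟩ | ⟨h, _⟩ <;> rw [h] <;> linarith
    have ha0 : 0 < |r - 2| / r := by positivity
    have hsq : 1 - (|r - 2| / r) ^ 2 = (2 * Real.sqrt (r - 1) / r) ^ 2 := by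
      rw [div_pow, div_pow, mul_pow, Real.sq_sqrt (by linarith : (0:ℝ) ≤ r - 1), sq_abs]
      field_simp
      ring
    have harctan : Real.arctan (2 * Real.sqrt (r - 1) / |r - 2|)
        = Real.arccos (|r - 2| / r) := by
      rw [Real.arccos_eq_arctan ha0]
      congr 1
      rw [hsq, Real.sqrt_sq (by positivity)]
      field_simp
    rw [harctan, ha]
    have hmem : |φ| ∈ Set.Icc 0 π := ⟨abs_nonneg _, by linarith [Real.pi_pos]⟩
    have key := Real.strictAntiOn_cos.le_iff_ge
      (Set.mem_Icc.2 ⟨Real.arccos_nonneg (|r - 2| / r), Real.arccos_le_pi (|r - 2| / r)⟩) hmem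
    rw [Real.cos_arccos (by linarith : (-1:ℝ) ≤ |r - 2| / r) ha1.le, Real.cos_abs] at key
    exact key
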